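/- Let {x_k} satisfy, for every x* ∈ X* ≠ ∅, the inequality ‖x_{k+1} - x*‖² ≤ ‖x_k - x*‖² - γ_k(2 - γ_k) (C²/m²) (f(x_k) - f*)^{2/p} for all k, where 0 < γ_lo ≤ γ_k ≤ γ_hi < 2, C > 0, p > 0, f continuous, f(x_k) ≥ f*, and X* = argmin_X f. Then f(x_k) → f* and {x_k} converges to a point of X*. -/
import Mathlib


open Filter

/-- Abstract form of Theorem 3.4: dynamic stepsize rule. -/
theorem stmt12 {n : ℕ} (x : ℕ → EuclideanSpace ℝ (Fin n))
    (X : Set (EuclideanSpace ℝ (Fin n))) (hXc : IsClosed X)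
    (f : EuclideanSpace ℝ (Fin n) → ℝ) (fstar C m p : ℝ)
    (hC : 0 < C) (hm : 1 ≤ m) (hp : 0 < p)
    (hcont : Continuous f)
    (Xstar : Set (EuclideanSpace ℝ (Fin n)))
    (hXstar : Xstar = {y ∈ X | ∀ w ∈ X, f y ≤ f w}) (hne : Xstar.Nonempty)
    (hfstar : ∀ y ∈ Xstar, f y = fstar)
    (hxX : ∀ k, x k ∈ X)
    (hf : ∀ k, fstar ≤ f (x k))
    (γ : ℕ → ℝ) (γlo γhi : ℝ) (hγlo : 0 < γlo) (hγhi : γhi < 2)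
    (hγ : ∀ k, γlo ≤ γ k ∧ γ k ≤ γhi)
    (hBI : ∀ xs ∈ Xstar, ∀ k, ‖x (k + 1) - xs‖ ^ 2 ≤ ‖x k - xs‖ ^ 2
        - γ k * (2 - γ k) * (C ^ 2 / m ^ 2) * (f (x k) - fstar) ^ (2 / p)) :
    Tendsto (fun k => f (x k)) atTop (nhds fstar) ∧
      ∃ xbar ∈ Xstar, Tendsto x atTop (nhds xbar) := by
  obtain ⟨xs, hxs⟩ := hne
  have hm0 : (0 : ℝ) < m := lt_of_lt_of_le one_pos hm
  set c : ℝ := γlo * (2 - γhi) * (C ^ 2 / m ^ 2) with hc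
  have hcpos : 0 < c :=
    mul_pos (mul_pos hγlo (by linarith)) (div_pos (pow_pos hC 2) (pow_pos hm0 2))
  set t : ℕ → ℝ := fun k => (f (x k) - fstar) ^ (2 / p) with ht
  have htnn : ∀ k, 0 ≤ t k := fun k => Real.rpow_nonneg (by linarith [hf k]) _
  -- key inequality
  have hstep : ∀ z ∈ Xstar, ∀ k,
      c * t k ≤ ‖x k - z‖ ^ 2 - ‖x (k + 1) - z‖ ^ 2 := by
    intro z hz k
    have hB := hBI z hz k
    obtain ⟨h1, h2⟩ := hγ k
    have hg : c ≤ γ k * (2 - γ k) * (C ^ 2 / m ^ 2) := by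
      have : γlo * (2 - γhi) ≤ γ k * (2 - γ k) :=
        mul_le_mul h1 (by linarith) (by linarith) (by linarith)
      exact mul_le_mul_of_nonneg_right this (by positivity)
    have := mul_le_mul_of_nonneg_right hg (htnn k)
    linarith
  -- monotonicity of distances to any optimal point
  have hmono : ∀ z ∈ Xstar, Antitone fun k => ‖x k - z‖ := by
    intro z hz
    apply antitone_nat_of_succ_le
    intro k
    have h := hstep z hz k
    have h2 : ‖x (k + 1) - z‖ ^ 2 ≤ ‖x k - z‖ ^ 2 := by
      nlinarith [mul_nonneg hcpos.le (htnn k)]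
    exact (pow_le_pow_iff_left₀ (norm_nonneg _) (norm_nonneg _) (by norm_num)).mp h2
  -- convergence of distances to xs
  have hbddxs : BddBelow (Set.range fun k => ‖x k - xs‖) :=
    ⟨0, by rintro y ⟨k, rfl⟩; exact norm_nonneg _⟩
  have haL : Tendsto (fun k => ‖x k - xs‖) atTop (nhds (⨅ k, ‖x k - xs‖)) :=
    tendsto_atTop_ciInf (hmono xs hxs) hbddxs
  set L : ℝ := ⨅ k, ‖x k - xs‖ with hL
  have ha2 : Tendsto (fun k => ‖x k - xs‖ ^ 2) atTop (nhds (L ^ 2)) := haL.pow 2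
  have ha2' : Tendsto (fun k => ‖x (k + 1) - xs‖ ^ 2) atTop (nhds (L ^ 2)) :=
    ha2.comp (tendsto_add_atTop_nat 1)
  have hdiff : Tendsto (fun k => ‖x k - xs‖ ^ 2 - ‖x (k + 1) - xs‖ ^ 2) atTop (nhds 0) := by
    have := ha2.sub ha2'
    simpa using this
  -- t → 0
  have htzero : Tendsto t atTop (nhds 0) := by
    have hup : ∀ k, t k ≤ (‖x k - xs‖ ^ 2 - ‖x (k + 1) - xs‖ ^ 2) / c := by
      intro k
      rw [le_div_iff₀ hcpos]
      have := hstep xs hxs k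
      linarith
    have hdivc : Tendsto (fun k => (‖x k - xs‖ ^ 2 - ‖x (k + 1) - xs‖ ^ 2) / c)
        atTop (nhds 0) := by
      have := hdiff.div_const c
      simpa using this
    exact squeeze_zero htnn hup hdivc
  -- f (x k) → fstar
  have hfx : Tendsto (fun k => f (x k)) atTop (nhds fstar) := by
    have hs : Tendsto (fun k => f (x k) - fstar) atTop (nhds 0) := by
      have h1 : Tendsto (fun k => t k ^ (p / 2)) atTop (nhds ((0 : ℝ) ^ (p / 2))) :=
        htzero.rpow_const (Or.inr (by positivity))
      have h0 : (0 : ℝ) ^ (p / 2) = 0 := Real.zero_rpow (by positivity)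
      rw [h0] at h1
      have heq : ∀ k, t k ^ (p / 2) = f (x k) - fstar := by
        intro k
        simp only [ht]
        rw [← Real.rpow_mul (by linarith [hf k]),
          show 2 / p * (p / 2) = 1 by field_simp, Real.rpow_one]
      simpa [funext heq] using h1
    have := hs.add_const fstar
    simpa using this
  refine ⟨hfx, ?_⟩
  -- bounded sequence, extract convergent subsequence
  have hball : ∀ k, x k ∈ Metric.closedBall xs ‖x 0 - xs‖ := by
    intro k
    rw [Metric.mem_closedBall, dist_eq_norm]
    exact hmono xs hxs (Nat.zero_le k)
  obtain ⟨xbar, -, φ, hφ, hconv⟩ :=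
    tendsto_subseq_of_bounded Metric.isBounded_closedBall hball
  have hxbarX : xbar ∈ X :=
    hXc.mem_of_tendsto hconv (Eventually.of_forall fun k => hxX (φ k))
  have hfxbar : f xbar = fstar := by
    have h1 : Tendsto (fun k => f (x (φ k))) atTop (nhds (f xbar)) :=
      (hcont.continuousAt.tendsto).comp hconv
    have h2 : Tendsto (fun k => f (x (φ k))) atTop (nhds fstar) :=
      hfx.comp hφ.tendsto_atTop
    exact tendsto_nhds_unique h1 h2
  have hxbarstar : xbar ∈ Xstar := by
    rw [hXstar]
    refine ⟨hxbarX, fun w hw => ?_⟩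
    rw [hfxbar, ← hfstar xs hxs]
    have := hXstar ▸ hxs
    exact this.2 w hw
  refine ⟨xbar, hxbarstar, ?_⟩
  -- Fejér: distances to xbar converge, subsequence → 0, so whole sequence → xbar
  have hbddb : BddBelow (Set.range fun k => ‖x k - xbar‖) :=
    ⟨0, by rintro y ⟨k, rfl⟩; exact norm_nonneg _⟩
  have hdL : Tendsto (fun k => ‖x k - xbar‖) atTop (nhds (⨅ k, ‖x k - xbar‖)) :=
    tendsto_atTop_ciInf (hmono xbar hxbarstar) hbddb
  have hsub0 : Tendsto (fun k => ‖x (φ k) - xbar‖) atTop (nhds 0) := by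
    have := tendsto_iff_norm_sub_tendsto_zero.mp hconv
    simpa [Function.comp] using this
  have hsubL : Tendsto (fun k => ‖x (φ k) - xbar‖) atTop
      (nhds (⨅ k, ‖x k - xbar‖)) := hdL.comp hφ.tendsto_atTop
  have hL0 : (⨅ k, ‖x k - xbar‖) = 0 := tendsto_nhds_unique hsubL hsub0
  rw [hL0] at hdL
  exact tendsto_iff_norm_sub_tendsto_zero.mpr hdL
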